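/- Let P be a finite set and λ : Powerset(P) → ℝ with λ_∅ = 1 and θ(k) := ∑_{d ⊆ k} λ_d ≥ 0 for all k ⊆ P. If λ is supported on subsets of size at most 2m, then every subset k ⊆ P of size 2m+1 contains a nonempty subset d with θ(d) ≥ 2^{-2m}. -/

import Mathlib

open Finset

lemma mobius_inv {P : Type*} [DecidableEq P] (lam θ : Finset P → ℝ)
    (hθ : ∀ k : Finset P, θ k = ∑ d ∈ k.powerset, lam d) (k : Finset P) :
    ∑ d ∈ k.powerset, (-1 : ℝ) ^ ((k \ d).card) * θ d = lam k := by
  simp_rw [hθ, Finset.mul_sum]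
  rw [Finset.sum_comm' (s' := fun e => (k.powerset).filter (fun d => e ⊆ d)) (t' := k.powerset)
    (by intro d e; simp only [mem_powerset, mem_filter]; constructor
        · rintro ⟨h1, h2⟩; exact ⟨⟨h1, h2⟩, h2.trans h1⟩
        · rintro ⟨⟨h1, h2⟩, h3⟩; exact ⟨h1, h2⟩)]
  have key : ∀ e ∈ k.powerset,
      ∑ d ∈ (k.powerset).filter (fun d => e ⊆ d), (-1 : ℝ) ^ ((k \ d).card) * lam e
        = (if e = k then lam e else 0) := by
    intro e he
    rw [mem_powerset] at he
    rw [← Finset.sum_mul]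
    have hbij : ∑ d ∈ (k.powerset).filter (fun d => e ⊆ d), (-1 : ℝ) ^ ((k \ d).card)
        = ∑ c ∈ (k \ e).powerset, (-1 : ℝ) ^ c.card := by
      apply Finset.sum_nbij' (i := fun d => k \ d) (j := fun c => k \ c)
      · intro d hd
        rw [mem_filter, mem_powerset] at hd
        rw [mem_powerset]
        exact sdiff_subset_sdiff le_rfl hd.2
      · intro c hc
        rw [mem_powerset] at hc
        rw [mem_filter, mem_powerset]
        refine ⟨sdiff_subset, ?_⟩
        intro x hx
        rw [mem_sdiff]
        refine ⟨he hx, fun hxc => ?_⟩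
        exact (mem_sdiff.mp (hc hxc)).2 hx
      · intro d hd
        rw [mem_filter, mem_powerset] at hd
        exact Finset.sdiff_sdiff_eq_self hd.1
      · intro c hc
        rw [mem_powerset] at hc
        exact Finset.sdiff_sdiff_eq_self (hc.trans sdiff_subset)
      · intros; rfl
    rw [hbij]
    have hint : ∑ c ∈ (k \ e).powerset, (-1 : ℝ) ^ c.card
        = if (k \ e) = ∅ then 1 else 0 := by
      have h := Finset.sum_powerset_neg_one_pow_card (x := k \ e)
      have : ((∑ c ∈ (k \ e).powerset, (-1 : ℤ) ^ c.card : ℤ) : ℝ)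
          = ∑ c ∈ (k \ e).powerset, (-1 : ℝ) ^ c.card := by push_cast; rfl
      rw [← this, h]
      split_ifs <;> simp
    rw [hint]
    by_cases hek : e = k
    · subst hek
      rw [if_pos (by simp), if_pos rfl, one_mul]
    · rw [if_neg (by rw [sdiff_eq_empty_iff_subset]; intro h; exact hek (le_antisymm he h)),
        if_neg hek, zero_mul]
  rw [Finset.sum_congr rfl key, Finset.sum_ite_eq' k.powerset k lam,
    if_pos (Finset.mem_powerset_self k)]

/-- If `λ_∅ = 1`, all partial sums `θ(k) = ∑_{d ⊆ k} λ_d` are nonnegative, and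
`λ` is supported on sets of size at most `2m`, then every `k` of size `2m+1`
contains a nonempty subset `d` with `θ(d) ≥ 2^{-2m}`. -/
theorem exists_good_divisor {P : Type*} [Fintype P] [DecidableEq P] (m : ℕ)
    (lam : Finset P → ℝ) (θ : Finset P → ℝ)
    (hθ : ∀ k : Finset P, θ k = ∑ d ∈ k.powerset, lam d)
    (hlam1 : lam ∅ = 1)
    (hθ0 : ∀ k : Finset P, 0 ≤ θ k)
    (hsupp : ∀ d : Finset P, 2 * m < d.card → lam d = 0) :
    ∀ k : Finset P, k.card = 2 * m + 1 →
      ∃ d ⊆ k, d.Nonempty ∧ ((2 : ℝ) ^ (2 * m))⁻¹ ≤ θ d := by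
  intro k hk
  have hlamk : lam k = 0 := hsupp k (by omega)
  have hmob := mobius_inv lam θ hθ k
  rw [hlamk] at hmob
  set S := (k.powerset).filter (fun d => Even ((k \ d).card)) with hS
  set T := (k.powerset).filter (fun d => ¬ Even ((k \ d).card)) with hT
  have e1 : ∑ d ∈ S, (-1 : ℝ) ^ ((k \ d).card) * θ d = ∑ d ∈ S, θ d := by
    refine Finset.sum_congr rfl fun d hd => ?_
    rw [hS, mem_filter] at hd
    rw [Even.neg_one_pow hd.2, one_mul]
  have e2 : ∑ d ∈ T, (-1 : ℝ) ^ ((k \ d).card) * θ d = - ∑ d ∈ T, θ d := by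
    rw [← Finset.sum_neg_distrib]
    refine Finset.sum_congr rfl fun d hd => ?_
    rw [hT, mem_filter] at hd
    rw [Odd.neg_one_pow (Nat.not_even_iff_odd.mp hd.2)]
    ring
  have hsplit : ∑ d ∈ S, θ d - ∑ d ∈ T, θ d = 0 := by
    rw [← hmob, ← Finset.sum_filter_add_sum_filter_not k.powerset
      (fun d => Even ((k \ d).card)) (fun d => (-1 : ℝ) ^ ((k \ d).card) * θ d),
      ← hS, ← hT, e1, e2]
    ring
  have hθe : θ ∅ = 1 := by rw [hθ]; simpa using hlam1
  have hempT : ∅ ∈ T := by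
    rw [hT, mem_filter, mem_powerset]
    refine ⟨empty_subset k, ?_⟩
    rw [sdiff_empty, hk]
    simp [Nat.even_add_one, parity_simps]
  have hT1 : (1:ℝ) ≤ ∑ d ∈ T, θ d := by
    rw [← hθe]
    exact Finset.single_le_sum (fun d _ => hθ0 d) hempT
  have hS1 : (1:ℝ) ≤ ∑ d ∈ S, θ d := by linarith
  obtain ⟨a, ha⟩ : k.Nonempty := by
    rw [← Finset.card_pos, hk]; omega
  have hcard : S.card ≤ 2 ^ (2 * m) := by
    have hinj : ∀ d₁ ∈ S, ∀ d₂ ∈ S, d₁.erase a = d₂.erase a → d₁ = d₂ := by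
      intro d₁ h₁ d₂ h₂ h
      rw [hS, mem_filter, mem_powerset] at h₁ h₂
      by_contra hne
      have hab : (a ∈ d₁) ≠ (a ∈ d₂) := by
        by_contra hab
        apply hne
        simp only [ne_eq, eq_iff_iff, not_not] at hab
        ext x
        by_cases hx : x = a
        · subst hx; exact hab
        · constructor <;> intro hxd
          · have hxe : x ∈ d₁.erase a := Finset.mem_erase.mpr ⟨hx, hxd⟩
            rw [h] at hxe; exact (Finset.mem_erase.mp hxe).2
          · have hxe : x ∈ d₂.erase a := Finset.mem_erase.mpr ⟨hx, hxd⟩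
            rw [← h] at hxe; exact (Finset.mem_erase.mp hxe).2
      have hc1 : d₁.card = (d₁.erase a).card + (if a ∈ d₁ then 1 else 0) := by
        by_cases hm : a ∈ d₁
        · rw [if_pos hm, Finset.card_erase_of_mem hm]
          have h1 : 1 ≤ d₁.card := Finset.card_pos.mpr ⟨a, hm⟩
          omega
        · rw [if_neg hm, Finset.erase_eq_of_notMem hm]; omega
      have hc2 : d₂.card = (d₂.erase a).card + (if a ∈ d₂ then 1 else 0) := by
        by_cases hm : a ∈ d₂
        · rw [if_pos hm, Finset.card_erase_of_mem hm]
          have h1 : 1 ≤ d₂.card := Finset.card_pos.mpr ⟨a, hm⟩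
          omega
        · rw [if_neg hm, Finset.erase_eq_of_notMem hm]; omega
      have hcd1 : (k \ d₁).card = k.card - d₁.card := Finset.card_sdiff_of_subset h₁.1
      have hcd2 : (k \ d₂).card = k.card - d₂.card := Finset.card_sdiff_of_subset h₂.1
      have hle1 : d₁.card ≤ k.card := Finset.card_le_card h₁.1
      have hle2 : d₂.card ≤ k.card := Finset.card_le_card h₂.1
      have he1 := h₁.2
      have he2 := h₂.2
      rw [Nat.even_iff] at he1 he2
      have hee : (d₁.erase a).card = (d₂.erase a).card := by rw [h]
      rcases em (a ∈ d₁) with hm1 | hm1 <;> rcases em (a ∈ d₂) with hm2 | hm2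
      · exact hab (by simp [hm1, hm2])
      · rw [if_pos hm1] at hc1; rw [if_neg hm2] at hc2; omega
      · rw [if_neg hm1] at hc1; rw [if_pos hm2] at hc2; omega
      · exact hab (by simp [hm1, hm2])
    calc S.card ≤ ((k.erase a).powerset).card := by
          apply Finset.card_le_card_of_injOn (fun d => d.erase a) ?_
            (fun d₁ h₁ d₂ h₂ hh => hinj d₁ h₁ d₂ h₂ hh)
          intro d hd
          rw [hS, Finset.mem_coe, mem_filter, mem_powerset] at hd
          rw [Finset.mem_coe, mem_powerset]
          exact Finset.erase_subset_erase a hd.1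
      _ = 2 ^ (2 * m) := by
          rw [Finset.card_powerset, Finset.card_erase_of_mem ha, hk]
          norm_num
  by_contra hcon
  push_neg at hcon
  have hSbound : ∀ d ∈ S, θ d < ((2:ℝ) ^ (2 * m))⁻¹ := by
    intro d hd
    rw [hS, mem_filter, mem_powerset] at hd
    refine hcon d hd.1 ?_
    rw [Finset.nonempty_iff_ne_empty]
    intro hde
    subst hde
    rw [sdiff_empty, hk] at hd
    have hdd := hd.2
    rw [Nat.even_iff] at hdd
    omega
  have hSne : S.Nonempty := by
    rw [Finset.nonempty_iff_ne_empty]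
    intro hh; rw [hh] at hS1; simp at hS1; linarith
  have hlt := Finset.sum_lt_sum_of_nonempty hSne hSbound
  rw [Finset.sum_const] at hlt
  have hlt2 : ∑ d ∈ S, θ d < S.card * ((2:ℝ) ^ (2 * m))⁻¹ := by
    simpa [nsmul_eq_mul] using hlt
  have hb : (S.card : ℝ) * ((2:ℝ) ^ (2 * m))⁻¹ ≤ 1 := by
    rw [← le_div_iff₀ (by positivity), one_div, inv_inv]
    exact_mod_cast hcard
  linarith
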